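/- (Lemma 1 of the paper.) With the random index sets {V_m}_{m∈ℳ} and the event G_μ defined in the context, the probability that {V_m}_{m∈ℳ} is not in G_μ converges to zero as the blocklength n tends to infinity: lim_{n→∞} Pr({V_m}_{m∈ℳ} ∉ G_μ) = 0. -/

import Mathlib

open scoped Classical
open Finset

noncomputable section

/-- `P` is a probability mass function on the finite type `X`. -/
def IsPMF {X : Type*} [Fintype X] (P : X → ℝ) : Prop :=
  (∀ x, 0 ≤ P x) ∧ ∑ x, P x = 1

/-- `W` is a (discrete memoryless) channel from `X` to `Y`. -/
def IsChannel {X Y : Type*} [Fintype Y] (W : X → Y → ℝ) : Prop :=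
  (∀ x y, 0 ≤ W x y) ∧ ∀ x, ∑ y, W x y = 1

/-- The `n`-fold memoryless extension `W^n(𝐲|𝐱) = ∏ᵢ W(yᵢ|xᵢ)`. -/
def Wn {X Y : Type*} (W : X → Y → ℝ) (n : ℕ) (x : Fin n → X) (y : Fin n → Y) : ℝ :=
  ∏ i, W (x i) (y i)

/-- Mutual information `I(P,W)` (natural logarithm), with the convention that
terms with `P x * W x y = 0` contribute `0`. -/
def mutInf {X Y : Type*} [Fintype X] [Fintype Y] (P : X → ℝ) (W : X → Y → ℝ) : ℝ :=
  ∑ x, ∑ y, if P x * W x y = 0 then 0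
    else P x * W x y * Real.log (W x y / ∑ x', P x' * W x' y)

/-- The error requirements of an `(n, M, l1, l2)` ID code for the DMC `W`:
maximum probability of missed identification at most `l1`, maximum probability
of wrong identification at most `l2`. -/
def IDCodeErr {X Y M : Type*} [Fintype X] [Fintype Y]
    (n : ℕ) (W : X → Y → ℝ) (Q : M → (Fin n → X) → ℝ)
    (D : M → Finset (Fin n → Y)) (l1 l2 : ℝ) : Prop :=
  (∀ m, ∑ x, Q m x * ∑ y ∈ (D m)ᶜ, Wn W n x y ≤ l1) ∧
  (∀ m m', m ≠ m' → ∑ x, Q m x * ∑ y ∈ D m', Wn W n x y ≤ l2)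

/-- `(n, M, l1, l2)` ID code for the DMC `W`. -/
def IsIDCode {X Y M : Type*} [Fintype X] [Fintype Y]
    (n : ℕ) (W : X → Y → ℝ) (Q : M → (Fin n → X) → ℝ)
    (D : M → Finset (Fin n → Y)) (l1 l2 : ℝ) : Prop :=
  (∀ m, IsPMF (Q m)) ∧ IDCodeErr n W Q D l1 l2

/-- Number of ID messages: `⌈exp(exp(nR))⌉`. -/
def Kmsg (R : ℝ) (n : ℕ) : ℕ := Nat.ceil (Real.exp (Real.exp (n * R)))

/-- Size of the pool index set: `⌈e^{n R_pool}⌉`. -/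
def Kpool (Rpool : ℝ) (n : ℕ) : ℕ := Nat.ceil (Real.exp (n * Rpool))

/-- Probability, under independent Bernoulli(p) selection of each pair `(a,b)`,
of the outcome `ω : A → B → Bool`. -/
def bernWeight {A B : Type*} [Fintype A] [Fintype B] (p : ℝ) (ω : A → B → Bool) : ℝ :=
  ∏ a, ∏ b, if ω a b then p else 1 - p

/-- The (random) index set `V_a ⊆ B` determined by the outcome `ω`. -/
def idxSet {A B : Type*} [Fintype B] (ω : A → B → Bool) (a : A) : Finset B :=
  Finset.univ.filter (fun b => ω a b = true)

/-- The event `G_μ`: for every pair of distinct messages `m ≠ m'`, with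
`δₙ = e^{-nμ/2}`, one has `|V_m| > (1-δₙ)e^{nR̃}`, `|V_{m'}| < (1+δₙ)e^{nR̃}`,
and `|V_m ∩ V_{m'}| < 2 e^{n(R̃-μ/2)}`. -/
def GoodEventG {A B : Type*} [Fintype B] (Rt μ : ℝ) (n : ℕ) (ω : A → B → Bool) : Prop :=
  ∀ m m' : A, m ≠ m' →
    ((1 - Real.exp (-(n * μ / 2))) * Real.exp (n * Rt) < ((idxSet ω m).card : ℝ)) ∧
    (((idxSet ω m').card : ℝ) < (1 + Real.exp (-(n * μ / 2))) * Real.exp (n * Rt)) ∧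
    (((idxSet ω m ∩ idxSet ω m').card : ℝ) < 2 * Real.exp (n * (Rt - μ / 2)))

/-! ### Auxiliary lemmas for the proof of Lemma 1 -/

section AuxLemma1

lemma aux_sum_fun_prod {ι κ : Type*} [Fintype ι] [DecidableEq ι] [Fintype κ] (k : ι → κ → ℝ) :
    ∑ f : ι → κ, ∏ i, k i (f i) = ∏ i, ∑ c, k i c := by
  classical
  rw [Finset.prod_univ_sum (fun _ => Finset.univ) k, Fintype.piFinset_univ]

/-- The weight of a single row. -/
def rowW {B : Type*} [Fintype B] (p : ℝ) (g : B → Bool) : ℝ :=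
  ∏ b, if g b then p else 1 - p

variable {B : Type*} [Fintype B] [DecidableEq B]

lemma rowW_nonneg {p : ℝ} (hp0 : 0 ≤ p) (hp1 : p ≤ 1) (g : B → Bool) : 0 ≤ rowW p g :=
  Finset.prod_nonneg fun b _ => by by_cases h : g b <;> simp [h, hp0] <;> linarith

lemma bernWeight_nonneg {A B : Type*} [Fintype A] [Fintype B] {p : ℝ}
    (hp0 : 0 ≤ p) (hp1 : p ≤ 1) (ω : A → B → Bool) : 0 ≤ bernWeight p ω :=
  Finset.prod_nonneg fun a _ => Finset.prod_nonneg fun b _ => by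
    by_cases h : ω a b <;> simp [h, hp0] <;> linarith

lemma sum_rowW (p : ℝ) : ∑ g : B → Bool, rowW p g = 1 := by
  unfold rowW
  refine (aux_sum_fun_prod fun (b : B) (t : Bool) => if t then p else 1 - p).trans ?_
  simp

lemma sum_rowW_prod (p : ℝ) (φ : Bool → ℝ) :
    ∑ g : B → Bool, rowW p g * ∏ b, φ (g b)
      = (p * φ true + (1 - p) * φ false) ^ (Fintype.card B) := by
  have h : ∀ g : B → Bool, rowW p g * ∏ b, φ (g b)
      = ∏ b, ((if g b then p else 1 - p) * φ (g b)) := by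
    intro g; rw [Finset.prod_mul_distrib]; rfl
  rw [Finset.sum_congr rfl fun g _ => h g]
  refine (aux_sum_fun_prod fun (b : B) (t : Bool) => (if t then p else 1 - p) * φ t).trans ?_
  simp [Finset.prod_const]

lemma aux_sum_fun_prod2 {κ κ' : Type*} [Fintype κ] [Fintype κ'] (k : B → κ → κ' → ℝ) :
    ∑ g : B → κ, ∑ g' : B → κ', ∏ b, k b (g b) (g' b) = ∏ b, ∑ c, ∑ c', k b c c' := by
  have h1 : ∀ g : B → κ, ∑ g' : B → κ', ∏ b, k b (g b) (g' b)
      = ∏ b, ∑ c', k b (g b) c' := fun g => aux_sum_fun_prod (fun b t' => k b (g b) t')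
  rw [Finset.sum_congr rfl fun g _ => h1 g]
  exact aux_sum_fun_prod (fun b t => ∑ c', k b t c')

lemma sum_rowW2_prod (p : ℝ) (φ : Bool → Bool → ℝ) :
    ∑ g : B → Bool, ∑ g' : B → Bool, rowW p g * rowW p g' * ∏ b, φ (g b) (g' b)
      = (p * p * φ true true + p * (1 - p) * φ true false
        + (1 - p) * p * φ false true + (1 - p) * (1 - p) * φ false false)
          ^ (Fintype.card B) := by
  have h : ∀ g g' : B → Bool, rowW p g * rowW p g' * ∏ b, φ (g b) (g' b)
      = ∏ b, ((if g b then p else 1 - p) * (if g' b then p else 1 - p) * φ (g b) (g' b)) := by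
    intro g g'
    simp only [rowW, Finset.prod_mul_distrib]
  rw [Finset.sum_congr rfl fun g _ => Finset.sum_congr rfl fun g' _ => h g g']
  refine (aux_sum_fun_prod2 fun (b : B) (t t' : Bool) =>
    (if t then p else 1 - p) * (if t' then p else 1 - p) * φ t t').trans ?_
  have h2 : ∀ b : B, (∑ c : Bool, ∑ c' : Bool,
      (if c then p else 1 - p) * (if c' then p else 1 - p) * φ c c')
      = (p * p * φ true true + p * (1 - p) * φ true false
        + (1 - p) * p * φ false true + (1 - p) * (1 - p) * φ false false) := by
    intro b; simp [Fintype.sum_bool]; ring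
  rw [Finset.prod_congr rfl fun b _ => h2 b, Finset.prod_const, Finset.card_univ]

lemma cardS_cast (g : B → Bool) :
    ((Finset.univ.filter fun b => g b = true).card : ℝ) = ∑ b, if g b then (1:ℝ) else 0 := by
  rw [Finset.card_filter]
  push_cast
  rfl

lemma cardI_cast (g g' : B → Bool) :
    (((Finset.univ.filter fun b => g b = true) ∩ (Finset.univ.filter fun b => g' b = true)).card : ℝ)
      = ∑ b, if g b ∧ g' b then (1:ℝ) else 0 := by
  rw [← Finset.filter_and, Finset.card_filter]
  push_cast
  rfl

lemma base_pow_le {x : ℝ} (hx : 0 ≤ 1 + x) (N : ℕ) :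
    (1 + x) ^ N ≤ Real.exp ((N : ℝ) * x) := by
  calc (1 + x) ^ N ≤ (Real.exp x) ^ N := by
        exact pow_le_pow_left₀ hx (by linarith [Real.add_one_le_exp x]) N
    _ = Real.exp ((N : ℝ) * x) := by rw [← Real.exp_nat_mul]

lemma chernoff_up (p s a : ℝ) (hp0 : 0 ≤ p) (hp1 : p ≤ 1) (hs : 0 ≤ s) :
    ∑ g : B → Bool, rowW p g * (if a ≤ ∑ b, (if g b then (1:ℝ) else 0) then (1:ℝ) else 0)
      ≤ Real.exp ((Fintype.card B : ℝ) * (p * (Real.exp s - 1)) - s * a) := by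
  set N := Fintype.card B
  have hexp : ∀ g : B → Bool,
      Real.exp (-(s*a)) * ∏ b, Real.exp (s * (if g b then (1:ℝ) else 0))
        = Real.exp (s * (∑ b, if g b then (1:ℝ) else 0) - s * a) := by
    intro g
    rw [← Real.exp_sum, ← Real.exp_add, ← Finset.mul_sum]
    ring_nf
  have step1 : ∀ g : B → Bool,
      rowW p g * (if a ≤ ∑ b, (if g b then (1:ℝ) else 0) then (1:ℝ) else 0)
        ≤ rowW p g * (Real.exp (-(s*a)) * ∏ b, Real.exp (s * (if g b then (1:ℝ) else 0))) := by
    intro g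
    refine mul_le_mul_of_nonneg_left ?_ (rowW_nonneg hp0 hp1 g)
    rw [hexp g]
    split_ifs with h
    · exact Real.one_le_exp (by nlinarith)
    · positivity
  calc ∑ g : B → Bool, rowW p g * (if a ≤ ∑ b, (if g b then (1:ℝ) else 0) then (1:ℝ) else 0)
      ≤ ∑ g : B → Bool, rowW p g * (Real.exp (-(s*a)) * ∏ b, Real.exp (s * (if g b then (1:ℝ) else 0))) :=
        Finset.sum_le_sum fun g _ => step1 g
    _ = Real.exp (-(s*a)) * ∑ g : B → Bool, rowW p g * ∏ b, Real.exp (s * (if g b then (1:ℝ) else 0)) := by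
        rw [Finset.mul_sum]; exact Finset.sum_congr rfl fun g _ => by ring
    _ = Real.exp (-(s*a)) * (p * Real.exp (s*1) + (1-p) * Real.exp (s*0)) ^ N := by
        rw [sum_rowW_prod p (fun t => Real.exp (s * (if t then (1:ℝ) else 0)))]
        norm_num
        rfl
    _ ≤ Real.exp (-(s*a)) * Real.exp ((N:ℝ) * (p * (Real.exp s - 1))) := by
        refine mul_le_mul_of_nonneg_left ?_ (Real.exp_pos _).le
        have h : p * Real.exp (s*1) + (1-p) * Real.exp (s*0) = 1 + p * (Real.exp s - 1) := by
          simp [Real.exp_zero]; ring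
        rw [h]
        exact base_pow_le (by nlinarith [Real.exp_pos s, Real.add_one_le_exp s]) N
    _ = Real.exp ((N : ℝ) * (p * (Real.exp s - 1)) - s * a) := by
        rw [← Real.exp_add]; ring_nf

lemma chernoff_down (p s a : ℝ) (hp0 : 0 ≤ p) (hp1 : p ≤ 1) (hs : 0 ≤ s) :
    ∑ g : B → Bool, rowW p g * (if (∑ b, if g b then (1:ℝ) else 0) ≤ a then (1:ℝ) else 0)
      ≤ Real.exp ((Fintype.card B : ℝ) * (p * (Real.exp (-s) - 1)) + s * a) := by
  set N := Fintype.card B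
  have hexp : ∀ g : B → Bool,
      Real.exp (s*a) * ∏ b, Real.exp ((-s) * (if g b then (1:ℝ) else 0))
        = Real.exp (s * a - s * (∑ b, if g b then (1:ℝ) else 0)) := by
    intro g
    rw [← Real.exp_sum, ← Real.exp_add, ← Finset.mul_sum]
    ring_nf
  have step1 : ∀ g : B → Bool,
      rowW p g * (if (∑ b, if g b then (1:ℝ) else 0) ≤ a then (1:ℝ) else 0)
        ≤ rowW p g * (Real.exp (s*a) * ∏ b, Real.exp ((-s) * (if g b then (1:ℝ) else 0))) := by
    intro g
    refine mul_le_mul_of_nonneg_left ?_ (rowW_nonneg hp0 hp1 g)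
    rw [hexp g]
    split_ifs with h
    · exact Real.one_le_exp (by nlinarith)
    · positivity
  calc ∑ g : B → Bool, rowW p g * (if (∑ b, if g b then (1:ℝ) else 0) ≤ a then (1:ℝ) else 0)
      ≤ ∑ g : B → Bool, rowW p g * (Real.exp (s*a) * ∏ b, Real.exp ((-s) * (if g b then (1:ℝ) else 0))) :=
        Finset.sum_le_sum fun g _ => step1 g
    _ = Real.exp (s*a) * ∑ g : B → Bool, rowW p g * ∏ b, Real.exp ((-s) * (if g b then (1:ℝ) else 0)) := by
        rw [Finset.mul_sum]; exact Finset.sum_congr rfl fun g _ => by ring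
    _ = Real.exp (s*a) * (p * Real.exp ((-s)*1) + (1-p) * Real.exp ((-s)*0)) ^ N := by
        rw [sum_rowW_prod p (fun t => Real.exp ((-s) * (if t then (1:ℝ) else 0)))]
        norm_num
        rfl
    _ ≤ Real.exp (s*a) * Real.exp ((N:ℝ) * (p * (Real.exp (-s) - 1))) := by
        refine mul_le_mul_of_nonneg_left ?_ (Real.exp_pos _).le
        have h : p * Real.exp ((-s)*1) + (1-p) * Real.exp ((-s)*0) = 1 + p * (Real.exp (-s) - 1) := by
          simp [Real.exp_zero]; ring
        rw [h]
        exact base_pow_le (by nlinarith [Real.exp_pos (-s), Real.add_one_le_exp (-s)]) N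
    _ = Real.exp ((N : ℝ) * (p * (Real.exp (-s) - 1)) + s * a) := by
        rw [← Real.exp_add]; ring_nf

lemma chernoff_inter (p a : ℝ) (hp0 : 0 ≤ p) (hp1 : p ≤ 1) :
    ∑ g : B → Bool, ∑ g' : B → Bool, rowW p g * rowW p g' *
        (if a ≤ ∑ b, (if g b ∧ g' b then (1:ℝ) else 0) then (1:ℝ) else 0)
      ≤ Real.exp ((Fintype.card B : ℝ) * (p^2 * (Real.exp 1 - 1)) - a) := by
  set N := Fintype.card B
  have hexp : ∀ g g' : B → Bool,
      Real.exp (-a) * ∏ b, Real.exp (if g b ∧ g' b then (1:ℝ) else 0)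
        = Real.exp ((∑ b, if g b ∧ g' b then (1:ℝ) else 0) - a) := by
    intro g g'
    rw [← Real.exp_sum, ← Real.exp_add]
    ring_nf
  have step1 : ∀ g g' : B → Bool,
      rowW p g * rowW p g' * (if a ≤ ∑ b, (if g b ∧ g' b then (1:ℝ) else 0) then (1:ℝ) else 0)
        ≤ rowW p g * rowW p g' * (Real.exp (-a) * ∏ b, Real.exp (if g b ∧ g' b then (1:ℝ) else 0)) := by
    intro g g'
    refine mul_le_mul_of_nonneg_left ?_
      (mul_nonneg (rowW_nonneg hp0 hp1 g) (rowW_nonneg hp0 hp1 g'))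
    rw [hexp g g']
    split_ifs with h
    · exact Real.one_le_exp (by nlinarith)
    · positivity
  calc ∑ g : B → Bool, ∑ g' : B → Bool, rowW p g * rowW p g' *
        (if a ≤ ∑ b, (if g b ∧ g' b then (1:ℝ) else 0) then (1:ℝ) else 0)
      ≤ ∑ g : B → Bool, ∑ g' : B → Bool, rowW p g * rowW p g' *
        (Real.exp (-a) * ∏ b, Real.exp (if g b ∧ g' b then (1:ℝ) else 0)) :=
        Finset.sum_le_sum fun g _ => Finset.sum_le_sum fun g' _ => step1 g g'
    _ = Real.exp (-a) * ∑ g : B → Bool, ∑ g' : B → Bool, rowW p g * rowW p g' *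
          ∏ b, Real.exp (if g b ∧ g' b then (1:ℝ) else 0) := by
        rw [Finset.mul_sum]
        exact Finset.sum_congr rfl fun g _ => by
          rw [Finset.mul_sum]; exact Finset.sum_congr rfl fun g' _ => by ring
    _ = Real.exp (-a) * (p * p * Real.exp 1 + p * (1-p) * 1 + (1-p) * p * 1 + (1-p)*(1-p)*1) ^ N := by
        rw [sum_rowW2_prod p (fun t t' => Real.exp (if t ∧ t' then (1:ℝ) else 0))]
        norm_num
        rfl
    _ ≤ Real.exp (-a) * Real.exp ((N:ℝ) * (p^2 * (Real.exp 1 - 1))) := by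
        refine mul_le_mul_of_nonneg_left ?_ (Real.exp_pos _).le
        have h : p * p * Real.exp 1 + p * (1-p) * 1 + (1-p) * p * 1 + (1-p)*(1-p)*1
            = 1 + p^2 * (Real.exp 1 - 1) := by ring
        rw [h]
        exact base_pow_le (by nlinarith [Real.exp_pos (1:ℝ), Real.add_one_le_exp (1:ℝ), sq_nonneg p]) N
    _ = Real.exp ((N : ℝ) * (p^2 * (Real.exp 1 - 1)) - a) := by
        rw [← Real.exp_add]; ring_nf

lemma exp_neg_le_quad {s : ℝ} (hs : 0 ≤ s) : Real.exp (-s) ≤ 1 - s + s^2 := by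
  have huv : Real.exp (-s) * Real.exp s = 1 := by rw [← Real.exp_add]; norm_num
  have h1 : Real.exp (-s) * (1 + s) ≤ 1 := by
    nlinarith [Real.add_one_le_exp s, Real.exp_pos (-s)]
  nlinarith [h1, mul_nonneg hs (mul_nonneg hs hs)]

lemma exp_le_quad {s : ℝ} (hs : 0 ≤ s) (hs2 : s ≤ 1/2) : Real.exp s ≤ 1 + s + 2*s^2 := by
  have huv : Real.exp (-s) * Real.exp s = 1 := by rw [← Real.exp_add]; norm_num
  have h1 : (1 - s) * Real.exp s ≤ 1 := by
    nlinarith [Real.add_one_le_exp (-s), Real.exp_pos s]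
  nlinarith [h1, Real.exp_pos s, mul_nonneg (mul_nonneg hs hs) hs]

lemma tail_low (p δ E : ℝ) (hp0 : 0 ≤ p) (hp1 : p ≤ 1) (hδ0 : 0 ≤ δ) (hδ1 : δ ≤ 1)
    (hE : 0 ≤ E) (hNp : E ≤ (Fintype.card B : ℝ) * p) :
    ∑ g : B → Bool, rowW p g *
        (if (∑ b, if g b then (1:ℝ) else 0) ≤ (1-δ)*E then (1:ℝ) else 0)
      ≤ Real.exp (-(E * δ^2 / 4)) := by
  refine le_trans (chernoff_down p (δ/2) ((1-δ)*E) hp0 hp1 (by linarith)) ?_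
  apply Real.exp_le_exp.mpr
  have hN : (0:ℝ) ≤ (Fintype.card B : ℝ) := Nat.cast_nonneg _
  have h1 : Real.exp (-(δ/2)) - 1 ≤ -(δ/2) + (δ/2)^2 := by
    have := exp_neg_le_quad (s := δ/2) (by linarith); linarith
  have hx : -(δ/2) + (δ/2)^2 ≤ 0 := by nlinarith
  have h2 : (Fintype.card B : ℝ) * p * (Real.exp (-(δ/2)) - 1)
      ≤ (Fintype.card B : ℝ) * p * (-(δ/2) + (δ/2)^2) :=
    mul_le_mul_of_nonneg_left h1 (mul_nonneg hN hp0)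
  have h3 : (Fintype.card B : ℝ) * p * (-(δ/2) + (δ/2)^2) ≤ E * (-(δ/2) + (δ/2)^2) :=
    mul_le_mul_of_nonpos_right hNp hx
  nlinarith [h2, h3]

lemma tail_up (p δ E : ℝ) (hp0 : 0 ≤ p) (hp1 : p ≤ 1) (hδ0 : 0 ≤ δ) (hδ1 : δ ≤ 1)
    (hE : 0 ≤ E) (hNp : (Fintype.card B : ℝ) * p ≤ E + 1) :
    ∑ g : B → Bool, rowW p g *
        (if (1+δ)*E ≤ (∑ b, if g b then (1:ℝ) else 0) then (1:ℝ) else 0)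
      ≤ Real.exp (1 - E * δ^2 / 8) := by
  refine le_trans (chernoff_up p (δ/4) ((1+δ)*E) hp0 hp1 (by linarith)) ?_
  apply Real.exp_le_exp.mpr
  have hN : (0:ℝ) ≤ (Fintype.card B : ℝ) := Nat.cast_nonneg _
  have h1 : Real.exp (δ/4) - 1 ≤ δ/4 + 2*(δ/4)^2 := by
    have := exp_le_quad (s := δ/4) (by linarith) (by linarith); linarith
  have h0 : 0 ≤ Real.exp (δ/4) - 1 := by
    have := Real.one_le_exp (x := δ/4) (by linarith); linarith
  have h2 : (Fintype.card B : ℝ) * p * (Real.exp (δ/4) - 1) ≤ (E+1) * (Real.exp (δ/4) - 1) :=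
    mul_le_mul_of_nonneg_right hNp h0
  have h3 : (E+1) * (Real.exp (δ/4) - 1) ≤ (E+1) * (δ/4 + 2*(δ/4)^2) :=
    mul_le_mul_of_nonneg_left h1 (by linarith)
  nlinarith [h2, h3]

lemma tail_inter (p c : ℝ) (hp0 : 0 ≤ p) (hp1 : p ≤ 1) (hc : 0 ≤ c)
    (hNp2 : 2*((Fintype.card B : ℝ) * p^2) ≤ c) :
    ∑ g : B → Bool, ∑ g' : B → Bool, rowW p g * rowW p g' *
        (if 2*c ≤ ∑ b, (if g b ∧ g' b then (1:ℝ) else 0) then (1:ℝ) else 0)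
      ≤ Real.exp (-c) := by
  refine le_trans (chernoff_inter p (2*c) hp0 hp1) ?_
  apply Real.exp_le_exp.mpr
  have hN : (0:ℝ) ≤ (Fintype.card B : ℝ) := Nat.cast_nonneg _
  have he : Real.exp 1 - 1 ≤ 2 := by
    nlinarith [Real.exp_one_lt_d9]
  have h2 : (Fintype.card B : ℝ) * (p^2 * (Real.exp 1 - 1)) ≤ (Fintype.card B : ℝ) * p^2 * 2 := by
    have := mul_nonneg hN (sq_nonneg p)
    nlinarith [Real.add_one_le_exp (1:ℝ)]
  nlinarith [h2]

lemma aux_sum_fun_prod_master {A : Type*} [Fintype A] [DecidableEq A] (h : A → B → Bool → ℝ) :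
    ∑ ω : A → B → Bool, ∏ a, ∏ b, h a b (ω a b) = ∏ a, ∏ b, ∑ t, h a b t := by
  refine (aux_sum_fun_prod (ι := A) (κ := B → Bool) (fun a g => ∏ b, h a b (g b))).trans ?_
  exact Finset.prod_congr rfl fun a _ => aux_sum_fun_prod (fun b t => h a b t)

lemma prod_two_points {A : Type*} [Fintype A] {m m' : A} (hne : m ≠ m') (f : A → ℝ)
    (h1 : ∀ a, a ≠ m → a ≠ m' → f a = 1) : ∏ a, f a = f m * f m' := by
  rw [← Finset.prod_pair hne]
  exact (Finset.prod_subset (Finset.subset_univ _) fun a _ ha =>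
    h1 a (fun h => ha (by simp [h])) (fun h => ha (by simp [h]))).symm

lemma marg {A : Type*} [Fintype A] [DecidableEq A] (p : ℝ) {m m' : A} (hne : m ≠ m')
    (F : (B → Bool) → (B → Bool) → ℝ) :
    ∑ ω : A → B → Bool, bernWeight p ω * F (ω m) (ω m')
      = ∑ g : B → Bool, ∑ g' : B → Bool, rowW p g * rowW p g' * F g g' := by
  classical
  have key : ∀ g g' : B → Bool,
      ∑ ω : A → B → Bool, bernWeight p ω *
        ((if ω m = g then (1:ℝ) else 0) * (if ω m' = g' then (1:ℝ) else 0))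
      = rowW p g * rowW p g' := by
    intro g g'
    have hpt : ∀ ω : A → B → Bool, bernWeight p ω *
        ((if ω m = g then (1:ℝ) else 0) * (if ω m' = g' then (1:ℝ) else 0))
        = ∏ a, ∏ b, ((if ω a b then p else 1-p) *
            (if a = m then (if ω a b = g b then (1:ℝ) else 0)
             else if a = m' then (if ω a b = g' b then (1:ℝ) else 0) else 1)) := by
      intro ω
      have hrow : ∀ a : A, ∏ b, (if a = m then (if ω a b = g b then (1:ℝ) else 0)
             else if a = m' then (if ω a b = g' b then (1:ℝ) else 0) else 1)
          = (if a = m then (if ω m = g then (1:ℝ) else 0)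
             else if a = m' then (if ω m' = g' then (1:ℝ) else 0) else 1) := by
        intro a
        by_cases h : a = m
        · subst h
          simp [Finset.prod_boole, funext_iff]
        · by_cases h' : a = m'
          · subst h'
            simp [h, Finset.prod_boole, funext_iff]
          · simp [h, h']
      rw [Finset.prod_congr rfl (fun a _ => Finset.prod_mul_distrib), Finset.prod_mul_distrib]
      unfold bernWeight
      congr 1
      rw [Finset.prod_congr rfl fun a _ => hrow a]
      rw [prod_two_points hne _ (fun a ha ha' => by simp [ha, ha'])]
      simp [hne, Ne.symm hne]
    rw [Finset.sum_congr rfl fun ω _ => hpt ω]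
    refine (aux_sum_fun_prod_master (fun a b t => (if t then p else 1-p) *
        (if a = m then (if t = g b then (1:ℝ) else 0)
         else if a = m' then (if t = g' b then (1:ℝ) else 0) else 1))).trans ?_
    have hval : ∀ a : A, ∀ b : B, (∑ t : Bool, ((if t then p else 1-p) *
            (if a = m then (if t = g b then (1:ℝ) else 0)
             else if a = m' then (if t = g' b then (1:ℝ) else 0) else 1)))
        = (if a = m then (if g b then p else 1-p)
           else if a = m' then (if g' b then p else 1-p) else 1) := by
      intro a b
      by_cases h : a = m
      · subst h; cases hgb : g b <;> simp [Fintype.sum_bool, hgb]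
      · by_cases h' : a = m'
        · subst h'; cases hgb : g' b <;> simp [Fintype.sum_bool, hgb, h]
        · simp [h, h', Fintype.sum_bool]
    rw [Finset.prod_congr rfl fun a _ => Finset.prod_congr rfl fun b _ => hval a b]
    rw [prod_two_points hne _ (fun a ha ha' => by simp [ha, ha'])]
    simp [hne, Ne.symm hne, rowW]
  have expand : ∀ ω : A → B → Bool, F (ω m) (ω m')
      = ∑ g : B → Bool, ∑ g' : B → Bool,
          ((if ω m = g then (1:ℝ) else 0) * (if ω m' = g' then (1:ℝ) else 0)) * F g g' := by
    intro ω
    symm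
    simp [ite_mul, zero_mul, one_mul, Finset.sum_ite_eq]
  calc ∑ ω : A → B → Bool, bernWeight p ω * F (ω m) (ω m')
      = ∑ ω : A → B → Bool, ∑ g : B → Bool, ∑ g' : B → Bool,
          (bernWeight p ω * ((if ω m = g then (1:ℝ) else 0) * (if ω m' = g' then (1:ℝ) else 0)))
            * F g g' := by
        refine Finset.sum_congr rfl fun ω _ => ?_
        rw [expand ω, Finset.mul_sum]
        refine Finset.sum_congr rfl fun g _ => ?_
        rw [Finset.mul_sum]
        exact Finset.sum_congr rfl fun g' _ => by ring
    _ = ∑ g : B → Bool, ∑ g' : B → Bool, (∑ ω : A → B → Bool,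
          bernWeight p ω * ((if ω m = g then (1:ℝ) else 0) * (if ω m' = g' then (1:ℝ) else 0)))
            * F g g' := by
        rw [Finset.sum_comm]
        refine Finset.sum_congr rfl fun g _ => ?_
        rw [Finset.sum_comm]
        refine Finset.sum_congr rfl fun g' _ => ?_
        rw [Finset.sum_mul]
    _ = ∑ g : B → Bool, ∑ g' : B → Bool, rowW p g * rowW p g' * F g g' :=
        Finset.sum_congr rfl fun g _ => Finset.sum_congr rfl fun g' _ => by rw [key g g']

/-- Indicator of the "bad pair" event. -/
def badInd {B : Type*} [Fintype B] (δ E c : ℝ) (g g' : B → Bool) : ℝ :=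
  (if (∑ b, if g b then (1:ℝ) else 0) ≤ (1-δ)*E then (1:ℝ) else 0)
  + (if (1+δ)*E ≤ (∑ b, if g' b then (1:ℝ) else 0) then (1:ℝ) else 0)
  + (if 2*c ≤ (∑ b, if g b ∧ g' b then (1:ℝ) else 0) then (1:ℝ) else 0)

lemma badInd_nonneg (δ E c : ℝ) (g g' : B → Bool) : 0 ≤ badInd δ E c g g' := by
  unfold badInd; split_ifs <;> norm_num

lemma texp_atTop {a : ℝ} (ha : 0 < a) :
    Filter.Tendsto (fun n : ℕ => Real.exp ((n:ℝ) * a)) Filter.atTop Filter.atTop := by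
  apply Real.tendsto_exp_atTop.comp
  exact Filter.Tendsto.atTop_mul_const ha tendsto_natCast_atTop_atTop

end AuxLemma1

set_option maxHeartbeats 2000000 in
/-- **Lemma 1.** With each `v ∈ 𝒱` included in the random index set
`V_m` independently with probability `e^{-n(R_pool - R̃)}`, the probability that
`{V_m}` is not in `G_μ` tends to zero as `n → ∞`. -/
theorem lemma1_prob_not_G_to_zero
    (R Rt Rpool μ : ℝ) (h0 : 0 < R) (h1 : R < Rt) (h2 : Rt < Rpool)
    (hμ0 : 0 < μ) (hμ : μ < min (Rpool - Rt) (Rt - R)) :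
    Filter.Tendsto
      (fun n : ℕ =>
        ∑ ω ∈ Finset.univ.filter
            (fun ω : Fin (Kmsg R n) → Fin (Kpool Rpool n) → Bool =>
              ¬ GoodEventG Rt μ n ω),
          bernWeight (Real.exp (-(n * (Rpool - Rt)))) ω)
      Filter.atTop (nhds 0) := by
  classical
  have hμ1 : μ < Rpool - Rt := lt_of_lt_of_le hμ (min_le_left _ _)
  have hμ2 : μ < Rt - R := lt_of_lt_of_le hμ (min_le_right _ _)
  -- Step A: deterministic bound under the intersection-moment side condition
  have key : ∀ n : ℕ,
      2 * ((Kpool Rpool n : ℝ) * (Real.exp (-((n:ℝ) * (Rpool - Rt))))^2)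
        ≤ Real.exp ((n:ℝ) * (Rt - μ/2)) →
      (∑ ω ∈ Finset.univ.filter
            (fun ω : Fin (Kmsg R n) → Fin (Kpool Rpool n) → Bool =>
              ¬ GoodEventG Rt μ n ω),
          bernWeight (Real.exp (-(n * (Rpool - Rt)))) ω)
        ≤ 3 * Real.exp (2 * Real.exp ((n:ℝ) * R) + 3 - Real.exp ((n:ℝ)*(Rt - μ))/8) := by
    intro n hI
    set p := Real.exp (-((n:ℝ) * (Rpool - Rt))) with hpdef
    set δ := Real.exp (-((n:ℝ) * μ / 2)) with hδdef
    set E := Real.exp ((n:ℝ) * Rt) with hEdef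
    set c := Real.exp ((n:ℝ) * (Rt - μ/2)) with hcdef
    set Q := Real.exp ((n:ℝ) * (Rt - μ)) with hQdef
    have hn0 : (0:ℝ) ≤ (n:ℝ) := Nat.cast_nonneg n
    have hp0 : (0:ℝ) ≤ p := (Real.exp_pos _).le
    have hp1 : p ≤ 1 := by
      rw [hpdef]
      apply Real.exp_le_one_iff.mpr
      nlinarith
    have hδ0 : (0:ℝ) ≤ δ := (Real.exp_pos _).le
    have hδ1 : δ ≤ 1 := by
      rw [hδdef]
      apply Real.exp_le_one_iff.mpr
      nlinarith
    have hE0 : (0:ℝ) ≤ E := (Real.exp_pos _).le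
    have hQ0 : (0:ℝ) ≤ Q := (Real.exp_pos _).le
    have hc0 : (0:ℝ) ≤ c := (Real.exp_pos _).le
    have hNp_lo : E ≤ (Kpool Rpool n : ℝ) * p := by
      have h := Nat.le_ceil (Real.exp ((n:ℝ) * Rpool))
      have h2 : Real.exp ((n:ℝ)*Rpool) * p ≤ (Kpool Rpool n : ℝ) * p := by
        refine mul_le_mul_of_nonneg_right ?_ hp0
        exact_mod_cast h
      calc E = Real.exp ((n:ℝ)*Rpool) * p := by
            rw [hpdef, hEdef, ← Real.exp_add]; congr 1; ring
        _ ≤ _ := h2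
    have hNp_hi : (Kpool Rpool n : ℝ) * p ≤ E + 1 := by
      have h : (Kpool Rpool n : ℝ) ≤ Real.exp ((n:ℝ)*Rpool) + 1 := by
        have h' := Nat.ceil_lt_add_one (Real.exp_nonneg ((n:ℝ)*Rpool))
        exact_mod_cast h'.le
      have h2 : (Kpool Rpool n : ℝ) * p ≤ (Real.exp ((n:ℝ)*Rpool) + 1) * p :=
        mul_le_mul_of_nonneg_right h hp0
      have h3 : Real.exp ((n:ℝ)*Rpool) * p = E := by
        rw [hpdef, hEdef, ← Real.exp_add]; congr 1; ring
      nlinarith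
    have hQE : E * δ^2 = Q := by
      rw [hδdef, hEdef, hQdef, sq, ← Real.exp_add, ← Real.exp_add]; congr 1; ring
    have hcQ : Q ≤ c := by
      rw [hcdef, hQdef]
      apply Real.exp_le_exp.mpr
      nlinarith
    -- bound for each (ordered) pair of messages
    have pairBound : ∀ m m' : Fin (Kmsg R n),
        (∑ ω : Fin (Kmsg R n) → Fin (Kpool Rpool n) → Bool,
          (if m = m' then 0 else bernWeight p ω * badInd δ E c (ω m) (ω m')))
        ≤ 3 * Real.exp (1 - Q/8) := by
      intro m m'
      by_cases hmm : m = m'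
      · calc (∑ ω : Fin (Kmsg R n) → Fin (Kpool Rpool n) → Bool,
              (if m = m' then (0:ℝ) else bernWeight p ω * badInd δ E c (ω m) (ω m')))
            = 0 := by
              rw [Finset.sum_congr rfl fun ω _ => if_pos hmm, Finset.sum_const_zero]
          _ ≤ 3 * Real.exp (1 - Q/8) := by positivity
      · simp only [if_neg hmm]
        rw [marg p hmm (badInd δ E c)]
        have hsplit : (∑ g : Fin (Kpool Rpool n) → Bool, ∑ g' : Fin (Kpool Rpool n) → Bool,
              rowW p g * rowW p g' * badInd δ E c g g')
            = (∑ g : Fin (Kpool Rpool n) → Bool, ∑ g' : Fin (Kpool Rpool n) → Bool,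
                rowW p g * rowW p g' *
                  (if (∑ b, if g b then (1:ℝ) else 0) ≤ (1-δ)*E then (1:ℝ) else 0))
            + (∑ g : Fin (Kpool Rpool n) → Bool, ∑ g' : Fin (Kpool Rpool n) → Bool,
                rowW p g * rowW p g' *
                  (if (1+δ)*E ≤ (∑ b, if g' b then (1:ℝ) else 0) then (1:ℝ) else 0))
            + (∑ g : Fin (Kpool Rpool n) → Bool, ∑ g' : Fin (Kpool Rpool n) → Bool,
                rowW p g * rowW p g' *
                  (if 2*c ≤ (∑ b, if g b ∧ g' b then (1:ℝ) else 0) then (1:ℝ) else 0)) := by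
          simp only [badInd, mul_add, Finset.sum_add_distrib]
        rw [hsplit]
        have hS1 : (∑ g : Fin (Kpool Rpool n) → Bool, ∑ g' : Fin (Kpool Rpool n) → Bool,
              rowW p g * rowW p g' *
                (if (∑ b, if g b then (1:ℝ) else 0) ≤ (1-δ)*E then (1:ℝ) else 0))
            = ∑ g : Fin (Kpool Rpool n) → Bool, rowW p g *
                (if (∑ b, if g b then (1:ℝ) else 0) ≤ (1-δ)*E then (1:ℝ) else 0) := by
          refine Finset.sum_congr rfl fun g _ => ?_
          calc ∑ g' : Fin (Kpool Rpool n) → Bool, rowW p g * rowW p g' *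
                (if (∑ b, if g b then (1:ℝ) else 0) ≤ (1-δ)*E then (1:ℝ) else 0)
              = (rowW p g * (if (∑ b, if g b then (1:ℝ) else 0) ≤ (1-δ)*E then (1:ℝ) else 0))
                  * ∑ g' : Fin (Kpool Rpool n) → Bool, rowW p g' := by
                rw [Finset.mul_sum]; exact Finset.sum_congr rfl fun g' _ => by ring
            _ = _ := by rw [sum_rowW]; ring
        have hS2 : (∑ g : Fin (Kpool Rpool n) → Bool, ∑ g' : Fin (Kpool Rpool n) → Bool,
              rowW p g * rowW p g' *
                (if (1+δ)*E ≤ (∑ b, if g' b then (1:ℝ) else 0) then (1:ℝ) else 0))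
            = ∑ g' : Fin (Kpool Rpool n) → Bool, rowW p g' *
                (if (1+δ)*E ≤ (∑ b, if g' b then (1:ℝ) else 0) then (1:ℝ) else 0) := by
          calc (∑ g : Fin (Kpool Rpool n) → Bool, ∑ g' : Fin (Kpool Rpool n) → Bool,
              rowW p g * rowW p g' *
                (if (1+δ)*E ≤ (∑ b, if g' b then (1:ℝ) else 0) then (1:ℝ) else 0))
              = (∑ g : Fin (Kpool Rpool n) → Bool, rowW p g) *
                (∑ g' : Fin (Kpool Rpool n) → Bool, rowW p g' *
                  (if (1+δ)*E ≤ (∑ b, if g' b then (1:ℝ) else 0) then (1:ℝ) else 0)) := by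
                rw [Finset.sum_mul]
                refine Finset.sum_congr rfl fun g _ => ?_
                rw [Finset.mul_sum]
                exact Finset.sum_congr rfl fun g' _ => by ring
            _ = _ := by rw [sum_rowW, one_mul]
        have hcard : ((Fintype.card (Fin (Kpool Rpool n))) : ℝ) = (Kpool Rpool n : ℝ) := by
          rw [Fintype.card_fin]
        have hB1 : (∑ g : Fin (Kpool Rpool n) → Bool, rowW p g *
              (if (∑ b, if g b then (1:ℝ) else 0) ≤ (1-δ)*E then (1:ℝ) else 0))
            ≤ Real.exp (-(E * δ^2 / 4)) :=
          tail_low p δ E hp0 hp1 hδ0 hδ1 hE0 (by rw [hcard]; exact hNp_lo)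
        have hB2 : (∑ g' : Fin (Kpool Rpool n) → Bool, rowW p g' *
              (if (1+δ)*E ≤ (∑ b, if g' b then (1:ℝ) else 0) then (1:ℝ) else 0))
            ≤ Real.exp (1 - E * δ^2 / 8) :=
          tail_up p δ E hp0 hp1 hδ0 hδ1 hE0 (by rw [hcard]; exact hNp_hi)
        have hB3 : (∑ g : Fin (Kpool Rpool n) → Bool, ∑ g' : Fin (Kpool Rpool n) → Bool,
              rowW p g * rowW p g' *
                (if 2*c ≤ (∑ b, if g b ∧ g' b then (1:ℝ) else 0) then (1:ℝ) else 0))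
            ≤ Real.exp (-c) :=
          tail_inter p c hp0 hp1 hc0 (by rw [hcard]; exact hI)
        have e1 : Real.exp (-(E * δ^2 / 4)) ≤ Real.exp (1 - Q/8) := by
          apply Real.exp_le_exp.mpr; linarith [hQE, hQ0]
        have e2 : Real.exp (1 - E * δ^2 / 8) ≤ Real.exp (1 - Q/8) := by
          apply Real.exp_le_exp.mpr; linarith [hQE, hQ0]
        have e3 : Real.exp (-c) ≤ Real.exp (1 - Q/8) := by
          apply Real.exp_le_exp.mpr; linarith
        rw [hS1, hS2]
        calc _ ≤ Real.exp (-(E * δ^2 / 4)) + Real.exp (1 - E * δ^2 / 8) + Real.exp (-c) := by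
              exact add_le_add (add_le_add hB1 hB2) hB3
          _ ≤ Real.exp (1 - Q/8) + Real.exp (1 - Q/8) + Real.exp (1 - Q/8) :=
              add_le_add (add_le_add e1 e2) e3
          _ = 3 * Real.exp (1 - Q/8) := by ring
    -- pointwise union bound
    have pointwise : ∀ ω : Fin (Kmsg R n) → Fin (Kpool Rpool n) → Bool,
        (if ¬ GoodEventG Rt μ n ω then bernWeight p ω else 0)
        ≤ ∑ m : Fin (Kmsg R n), ∑ m' : Fin (Kmsg R n),
            (if m = m' then 0 else bernWeight p ω * badInd δ E c (ω m) (ω m')) := by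
      intro ω
      have hterm : ∀ mm mm' : Fin (Kmsg R n),
          0 ≤ (if mm = mm' then 0 else bernWeight p ω * badInd δ E c (ω mm) (ω mm')) := by
        intro mm mm'
        split_ifs with h
        · exact le_refl 0
        · exact mul_nonneg (bernWeight_nonneg hp0 hp1 ω) (badInd_nonneg _ _ _ _ _)
      by_cases hG : GoodEventG Rt μ n ω
      · rw [if_neg (not_not_intro hG)]
        exact Finset.sum_nonneg fun mm _ => Finset.sum_nonneg fun mm' _ => hterm mm mm'
      · rw [if_pos hG]
        simp only [GoodEventG, not_forall, Classical.not_imp] at hG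
        obtain ⟨m, m', hne, hbad⟩ := hG
        rw [← hδdef, ← hEdef, ← hcdef] at hbad
        have hone : (1:ℝ) ≤ badInd δ E c (ω m) (ω m') := by
          have hA : (0:ℝ) ≤ (if (∑ b, if ω m b then (1:ℝ) else 0) ≤ (1-δ)*E
              then (1:ℝ) else 0) := by split_ifs <;> norm_num
          have hB : (0:ℝ) ≤ (if (1+δ)*E ≤ (∑ b, if ω m' b then (1:ℝ) else 0)
              then (1:ℝ) else 0) := by split_ifs <;> norm_num
          have hC : (0:ℝ) ≤ (if 2*c ≤ (∑ b, if ω m b ∧ ω m' b then (1:ℝ) else 0)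
              then (1:ℝ) else 0) := by split_ifs <;> norm_num
          unfold badInd
          rw [not_and_or, not_and_or] at hbad
          rcases hbad with h | h | h
          · have hle : ((idxSet ω m).card : ℝ) ≤ (1-δ)*E := by
              have := not_lt.mp h
              linarith
            have hle' : (∑ b, if ω m b then (1:ℝ) else 0) ≤ (1-δ)*E := by
              rw [← (cardS_cast (ω m) : ((Finset.univ.filter fun b => ω m b = true).card : ℝ) = _)]
              exact hle
            rw [if_pos hle']
            linarith
          · have hge : (1+δ)*E ≤ ((idxSet ω m').card : ℝ) := by
              have := not_lt.mp h
              linarith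
            have hge' : (1+δ)*E ≤ (∑ b, if ω m' b then (1:ℝ) else 0) := by
              rw [← (cardS_cast (ω m') : ((Finset.univ.filter fun b => ω m' b = true).card : ℝ) = _)]
              exact hge
            rw [if_pos hge']
            linarith
          · have hcongr : ((Finset.univ.filter fun b => ω m b = true)
                ∩ (Finset.univ.filter fun b => ω m' b = true))
                = @Inter.inter _ (@Finset.instInter (Fin (Kpool Rpool n))
                    (fun a b => Classical.propDecidable (a = b))) (idxSet ω m) (idxSet ω m') :=
              Finset.ext fun b => by simp [idxSet, Finset.mem_inter]
            have hge' : 2*c ≤ (∑ b, if ω m b ∧ ω m' b then (1:ℝ) else 0) := by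
              rw [← (cardI_cast (ω m) (ω m') : _ = _), hcongr]
              exact not_lt.mp h
            rw [if_pos hge']
            linarith
        calc bernWeight p ω = bernWeight p ω * 1 := (mul_one _).symm
          _ ≤ bernWeight p ω * badInd δ E c (ω m) (ω m') :=
              mul_le_mul_of_nonneg_left hone (bernWeight_nonneg hp0 hp1 ω)
          _ = (if m = m' then 0 else bernWeight p ω * badInd δ E c (ω m) (ω m')) :=
              (if_neg hne).symm
          _ ≤ ∑ mm' : Fin (Kmsg R n),
                (if m = mm' then 0 else bernWeight p ω * badInd δ E c (ω m) (ω mm')) :=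
              Finset.single_le_sum (fun j _ => hterm m j) (Finset.mem_univ m')
          _ ≤ _ :=
              Finset.single_le_sum
                (f := fun mm => ∑ mm' : Fin (Kmsg R n),
                  (if mm = mm' then 0 else bernWeight p ω * badInd δ E c (ω mm) (ω mm')))
                (fun i _ => Finset.sum_nonneg fun j _ => hterm i j) (Finset.mem_univ m)
    -- assemble
    have hK : (Kmsg R n : ℝ) ≤ Real.exp (Real.exp ((n:ℝ)*R) + 1) := by
      have h : (Kmsg R n : ℝ) ≤ Real.exp (Real.exp ((n:ℝ)*R)) + 1 := by
        have h' := Nat.ceil_lt_add_one (Real.exp_nonneg (Real.exp ((n:ℝ)*R)))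
        exact_mod_cast h'.le
      have h2 : Real.exp (Real.exp ((n:ℝ)*R) + 1)
          = Real.exp (Real.exp ((n:ℝ)*R)) * Real.exp 1 := Real.exp_add _ _
      nlinarith [Real.exp_one_gt_d9, Real.one_le_exp (Real.exp_nonneg ((n:ℝ)*R)),
        Real.exp_pos (Real.exp ((n:ℝ)*R))]
    have h3Q : (0:ℝ) ≤ 3 * Real.exp (1 - Q/8) := by positivity
    calc (∑ ω ∈ Finset.univ.filter
            (fun ω : Fin (Kmsg R n) → Fin (Kpool Rpool n) → Bool =>
              ¬ GoodEventG Rt μ n ω), bernWeight p ω)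
        = ∑ ω : Fin (Kmsg R n) → Fin (Kpool Rpool n) → Bool,
            (if ¬ GoodEventG Rt μ n ω then bernWeight p ω else 0) := Finset.sum_filter _ _
      _ ≤ ∑ ω : Fin (Kmsg R n) → Fin (Kpool Rpool n) → Bool,
            ∑ m : Fin (Kmsg R n), ∑ m' : Fin (Kmsg R n),
              (if m = m' then 0 else bernWeight p ω * badInd δ E c (ω m) (ω m')) :=
          Finset.sum_le_sum fun ω _ => pointwise ω
      _ = ∑ m : Fin (Kmsg R n), ∑ m' : Fin (Kmsg R n),
            ∑ ω : Fin (Kmsg R n) → Fin (Kpool Rpool n) → Bool,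
              (if m = m' then 0 else bernWeight p ω * badInd δ E c (ω m) (ω m')) := by
          rw [Finset.sum_comm]
          exact Finset.sum_congr rfl fun m _ => Finset.sum_comm
      _ ≤ ∑ m : Fin (Kmsg R n), ∑ m' : Fin (Kmsg R n), 3 * Real.exp (1 - Q/8) :=
          Finset.sum_le_sum fun m _ => Finset.sum_le_sum fun m' _ => pairBound m m'
      _ = (Kmsg R n : ℝ) * ((Kmsg R n : ℝ) * (3 * Real.exp (1 - Q/8))) := by
          simp only [Finset.sum_const, Finset.card_univ, Fintype.card_fin, nsmul_eq_mul]
      _ ≤ Real.exp (Real.exp ((n:ℝ)*R) + 1) *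
            (Real.exp (Real.exp ((n:ℝ)*R) + 1) * (3 * Real.exp (1 - Q/8))) := by
          have hK0 : (0:ℝ) ≤ (Kmsg R n : ℝ) := Nat.cast_nonneg _
          have hinner : (Kmsg R n : ℝ) * (3 * Real.exp (1 - Q/8))
              ≤ Real.exp (Real.exp ((n:ℝ)*R) + 1) * (3 * Real.exp (1 - Q/8)) :=
            mul_le_mul_of_nonneg_right hK h3Q
          calc (Kmsg R n : ℝ) * ((Kmsg R n : ℝ) * (3 * Real.exp (1 - Q/8)))
              ≤ (Kmsg R n : ℝ) * (Real.exp (Real.exp ((n:ℝ)*R) + 1) * (3 * Real.exp (1 - Q/8))) :=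
                mul_le_mul_of_nonneg_left hinner hK0
            _ ≤ _ := mul_le_mul_of_nonneg_right hK (by positivity)
      _ = 3 * Real.exp (2 * Real.exp ((n:ℝ) * R) + 3 - Q/8) := by
          rw [Real.exp_add (Real.exp ((n:ℝ)*R)) 1]
          rw [show (2 : ℝ) * Real.exp ((n:ℝ) * R) + 3 - Q/8
              = (Real.exp ((n:ℝ)*R) + 1) + ((Real.exp ((n:ℝ)*R) + 1) + (1 - Q/8)) by ring]
          rw [Real.exp_add, Real.exp_add (Real.exp ((n:ℝ)*R) + 1)]
          rw [Real.exp_add (Real.exp ((n:ℝ)*R)) 1]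
          ring
  -- Step B: the side condition holds eventually
  have hEv : ∀ᶠ n : ℕ in Filter.atTop,
      2 * ((Kpool Rpool n : ℝ) * (Real.exp (-((n:ℝ) * (Rpool - Rt))))^2)
        ≤ Real.exp ((n:ℝ) * (Rt - μ/2)) := by
    have ha : 0 < Rpool - Rt - μ/2 := by linarith
    have hb : 0 < Rt - μ/2 := by linarith
    filter_upwards [(texp_atTop ha).eventually_ge_atTop 4,
      (texp_atTop hb).eventually_ge_atTop 4] with n h4a h4b
    have hp0 : (0:ℝ) ≤ Real.exp (-((n:ℝ)*(Rpool-Rt))) := (Real.exp_pos _).le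
    have hn0 : (0:ℝ) ≤ (n:ℝ) := Nat.cast_nonneg n
    have hp1 : Real.exp (-((n:ℝ)*(Rpool-Rt))) ≤ 1 := by
      apply Real.exp_le_one_iff.mpr
      nlinarith
    have hK : (Kpool Rpool n : ℝ) ≤ Real.exp ((n:ℝ)*Rpool) + 1 := by
      have h' := Nat.ceil_lt_add_one (Real.exp_nonneg ((n:ℝ)*Rpool))
      exact_mod_cast h'.le
    have hmul : Real.exp ((n:ℝ)*Rpool) * (Real.exp (-((n:ℝ)*(Rpool-Rt))))^2
        = Real.exp ((n:ℝ)*(2*Rt-Rpool)) := by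
      rw [sq, ← Real.exp_add, ← Real.exp_add]; congr 1; ring
    have h5 : 4 * Real.exp ((n:ℝ)*(2*Rt-Rpool))
        ≤ Real.exp ((n:ℝ)*(Rpool-Rt-μ/2)) * Real.exp ((n:ℝ)*(2*Rt-Rpool)) :=
      mul_le_mul_of_nonneg_right h4a (Real.exp_pos _).le
    have h6 : Real.exp ((n:ℝ)*(Rpool-Rt-μ/2)) * Real.exp ((n:ℝ)*(2*Rt-Rpool))
        = Real.exp ((n:ℝ)*(Rt-μ/2)) := by
      rw [← Real.exp_add]; congr 1; ring
    have hsq : (Real.exp (-((n:ℝ)*(Rpool-Rt))))^2 ≤ 1 := by nlinarith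
    have h7 : (Kpool Rpool n : ℝ) * (Real.exp (-((n:ℝ)*(Rpool-Rt))))^2
        ≤ (Real.exp ((n:ℝ)*Rpool) + 1) * (Real.exp (-((n:ℝ)*(Rpool-Rt))))^2 :=
      mul_le_mul_of_nonneg_right hK (sq_nonneg _)
    nlinarith [h7, hmul, h5, h6, h4b, hsq, sq_nonneg (Real.exp (-((n:ℝ)*(Rpool-Rt))))]
  -- Step C: the upper bound tends to zero
  have hlim : Filter.Tendsto
      (fun n : ℕ => 3 * Real.exp (2 * Real.exp ((n:ℝ) * R) + 3 - Real.exp ((n:ℝ)*(Rt - μ))/8))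
      Filter.atTop (nhds 0) := by
    have hd : 0 < Rt - μ - R := by linarith
    have h2 : Filter.Tendsto
        (fun n : ℕ => Real.exp ((n:ℝ)*R) * (Real.exp ((n:ℝ)*(Rt-μ-R))/8 - 2) - 3)
        Filter.atTop Filter.atTop := by
      apply Filter.tendsto_atTop_add_const_right
      apply Filter.Tendsto.atTop_mul_atTop₀ (texp_atTop h0)
      apply Filter.tendsto_atTop_add_const_right
      exact Filter.Tendsto.atTop_div_const (by norm_num) (texp_atTop hd)
    have h1 : Filter.Tendsto
        (fun n : ℕ => 2 * Real.exp ((n:ℝ)*R) + 3 - Real.exp ((n:ℝ)*(Rt-μ))/8)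
        Filter.atTop Filter.atBot := by
      have hneg := Filter.tendsto_neg_atTop_atBot.comp h2
      refine hneg.congr fun n => ?_
      have hmul : Real.exp ((n:ℝ)*R) * Real.exp ((n:ℝ)*(Rt-μ-R)) = Real.exp ((n:ℝ)*(Rt-μ)) := by
        rw [← Real.exp_add]; congr 1; ring
      simp only [Function.comp_apply]
      linear_combination (-1/8 : ℝ) * hmul
    have h0' := Real.tendsto_exp_atBot.comp h1
    have h3 := h0'.const_mul (3:ℝ)
    simpa using h3
  -- Step D: squeeze
  refine tendsto_of_tendsto_of_tendsto_of_le_of_le' tendsto_const_nhds hlim ?_ ?_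
  · refine Filter.Eventually.of_forall fun n => ?_
    refine Finset.sum_nonneg fun ω _ => ?_
    refine bernWeight_nonneg (Real.exp_pos _).le ?_ ω
    apply Real.exp_le_one_iff.mpr
    nlinarith [Nat.cast_nonneg (α := ℝ) n]
  · filter_upwards [hEv] with n hn using key n hn
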